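/- (Regulation preservation, direction 2) Let f be asymptotic on M. If the local interaction graph G𝔹(f)(x) of the binarisation contains a positive (resp. negative) edge (i,j) → (i',j'), then Gf(ψ(x)) contains a positive (resp. negative) edge i → i'. -/
import Mathlib


/-!
Common setup: multilevel discrete networks (Faure–Kaji, "A circuit-preserving
mapping from multilevel to Boolean dynamics").

A gene `i` takes levels in `{0,...,b i}`, encoded as `Fin (b i + 1)`.
The Boolean case is `b i = 1`.
-/

namespace GRN

section Generic

variable {ι : Type*} [Fintype ι] [DecidableEq ι] (b : ι → ℕ)

/-- the state space `∏ i {0,…,b i}` -/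
abbrev GState := ∀ i : ι, Fin (b i + 1)

/-- L¹ distance between states -/
def dist1 (x x' : GState b) : ℕ := ∑ i, Nat.dist (x i : ℕ) (x' i : ℕ)

/-- edge relation of the asynchronous state transition graph `Γ(f)` -/
def stgEdge (f : GState b → GState b) (x x' : GState b) : Prop :=
  ∃ j : ι, (∀ k, k ≠ j → x' k = x k) ∧
    (((x j : ℕ) < (f x j : ℕ) ∧ (x' j : ℕ) = (x j : ℕ) + 1) ∨
     ((f x j : ℕ) < (x j : ℕ) ∧ (x' j : ℕ) + 1 = (x j : ℕ)))

/-- a grid graph: every edge joins states at distance one, and there are no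
two parallel outward edges at any vertex -/
def IsGridGraph (E : GState b → GState b → Prop) : Prop :=
  (∀ x x', E x x' → dist1 b x x' = 1) ∧
  (∀ (x x' x'' : GState b) (j : ι), E x x' → E x x'' →
    (∀ k, k ≠ j → x' k = x k) → (∀ k, k ≠ j → x'' k = x k) → x' = x'')

/-- asymptotic evolution function: `f i x ∈ {0, x i, b i}` -/
def Asymptotic (f : GState b → GState b) : Prop :=
  ∀ (x : GState b) (i : ι), (f x i : ℕ) = 0 ∨ f x i = x i ∨ (f x i : ℕ) = b i

/-- stepwise (unitary) evolution function: `|f i x - x i| ≤ 1` -/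
def Stepwise (f : GState b → GState b) : Prop :=
  ∀ (x : GState b) (i : ι), (f x i : ℕ) ≤ (x i : ℕ) + 1 ∧ (x i : ℕ) ≤ (f x i : ℕ) + 1

/-- the asymptotic function `f̄` associated with `f` -/
def asym (f : GState b → GState b) : GState b → GState b := fun x i =>
  if (x i : ℕ) < (f x i : ℕ) then Fin.last (b i)
  else if (f x i : ℕ) < (x i : ℕ) then 0 else x i

/-- the stepwise function `f̂` associated with `f` -/
def stepw (f : GState b → GState b) : GState b → GState b := fun x i =>
  if h : (x i : ℕ) < (f x i : ℕ) then ⟨(x i : ℕ) + 1, Nat.lt_of_le_of_lt h (f x i).isLt⟩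
  else if (f x i : ℕ) < (x i : ℕ) then
    ⟨(x i : ℕ) - 1, lt_of_le_of_lt (Nat.sub_le _ _) (x i).isLt⟩
  else x i

/-- `x + e j` (defined when `x j < b j`) -/
def bump (x : GState b) (j : ι) (h : (x j : ℕ) < b j) : GState b :=
  Function.update x j ⟨(x j : ℕ) + 1, Nat.succ_lt_succ h⟩

/-- `x - e j` -/
def drop (x : GState b) (j : ι) : GState b :=
  Function.update x j ⟨(x j : ℕ) - 1, lt_of_le_of_lt (Nat.sub_le _ _) (x j).isLt⟩

/-- positive edge `j → i` in the local interaction graph `Gf(x)`: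
`∂⁺ⱼfᵢ(x) > 0` or `∂⁻ⱼfᵢ(x) > 0` -/
def PosEdge (f : GState b → GState b) (x : GState b) (j i : ι) : Prop :=
  (∃ h : (x j : ℕ) < b j, (f x i : ℕ) < (f (bump b x j h) i : ℕ)) ∨
  (0 < (x j : ℕ) ∧ (f (drop b x j) i : ℕ) < (f x i : ℕ))

/-- negative edge `j → i` in the local interaction graph `Gf(x)` -/
def NegEdge (f : GState b → GState b) (x : GState b) (j i : ι) : Prop :=
  (∃ h : (x j : ℕ) < b j, (f (bump b x j h) i : ℕ) < (f x i : ℕ)) ∨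
  (0 < (x j : ℕ) ∧ (f x i : ℕ) < (f (drop b x j) i : ℕ))

/-- an edge with sign `s` (`true` = negative) -/
def SignedEdge (f : GState b → GState b) (x : GState b) (s : Bool) (j i : ι) : Prop :=
  if s then NegEdge b f x j i else PosEdge b f x j i

/-- a type-1 functional circuit at `x`, negative iff `neg`: a cycle (with
pairwise-distinct vertices) in the local interaction graph `Gf(x)` whose number
of negative edges is odd iff `neg` -/
def HasType1Circuit (f : GState b → GState b) (x : GState b) (neg : Bool) : Prop :=
  ∃ (k : ℕ) (v : Fin (k + 1) → ι) (s : Fin (k + 1) → Bool),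
    Function.Injective v ∧
    (∀ t, SignedEdge b f x (s t) (v t) (v (t + 1))) ∧
    (Odd (Finset.univ.filter fun t => s t = true).card ↔ neg = true)

/-- mutual reachability -/
def InSameSCC (E : GState b → GState b → Prop) (x y : GState b) : Prop :=
  Relation.ReflTransGen E x y ∧ Relation.ReflTransGen E y x

/-- the strongly connected component of `x` -/
def sccOf (E : GState b → GState b → Prop) (x : GState b) : Set (GState b) :=
  {y | InSameSCC b E x y}

/-- attractor: terminal strongly connected set of states -/
def IsAttractor (E : GState b → GState b → Prop) (A : Set (GState b)) : Prop :=
  A.Nonempty ∧ (∀ x ∈ A, ∀ y ∈ A, Relation.ReflTransGen E x y) ∧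
  (∀ x ∈ A, ∀ y, E x y → y ∈ A)

/-- stable state: no outgoing edges -/
def IsStable (E : GState b → GState b → Prop) (x : GState b) : Prop :=
  ∀ y, ¬ E x y

end Generic

section Binarisation

variable {n : ℕ} {m : Fin n → ℕ}

/-- index set of the Boolean state space `𝔹^(m₁+⋯+mₙ)` -/
abbrev BIdx (m : Fin n → ℕ) := Σ i : Fin n, Fin (m i)

/-- all maximal levels equal to 1 -/
abbrev bOne (m : Fin n → ℕ) : BIdx m → ℕ := fun _ => 1

/-- the Boolean state space `𝔹^(m₁+⋯+mₙ)` -/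
abbrev BState (m : Fin n → ℕ) := GState (bOne m)

/-- the surjection `ψ : 𝔹^(m₁+⋯+mₙ) → M`, counting ones in each block -/
def psi (x : BState m) : GState m := fun i =>
  ⟨∑ j : Fin (m i), (x ⟨i, j⟩ : ℕ), Nat.lt_succ_of_le (by
    calc ∑ j : Fin (m i), (x ⟨i, j⟩ : ℕ) ≤ ∑ _j : Fin (m i), 1 :=
          Finset.sum_le_sum (fun j _ => Nat.lt_succ_iff.mp (x ⟨i, j⟩).isLt)
      _ = m i := by simp)⟩

/-- Van Ham's embedding `b₀ : M → 𝔹^(m₁+⋯+mₙ)`: level `k` ↦ `k` ones then zeros -/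
def vanHam (y : GState m) : BState m := fun p =>
  if (p.2 : ℕ) < (y p.1 : ℕ) then 1 else 0

/-- the binarisation `𝔹(f)` of an (asymptotic) evolution function `f` -/
def binf (f : GState m → GState m) : BState m → BState m := fun x p =>
  if (psi x p.1 : ℕ) < (f (psi x) p.1 : ℕ) then 1
  else if (f (psi x) p.1 : ℕ) < (psi x p.1 : ℕ) then 0
  else x p

/-- the binarisation `𝔹(Γ)` of a grid graph over `M`:
edge `x → x'` iff `d(x,x') = 1` and `ψ(x) → ψ(x')` in `Γ` -/
def binGraph (E : GState m → GState m → Prop) : BState m → BState m → Prop :=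
  fun x x' => dist1 (bOne m) x x' = 1 ∧ E (psi x) (psi x')

/-- the action of `𝕊 = ∏ᵢ S_{mᵢ}` on `𝔹^(m₁+⋯+mₙ)` permuting blocks coordinatewise -/
def act (σ : ∀ i : Fin n, Equiv.Perm (Fin (m i))) (x : BState m) : BState m :=
  fun p => x ⟨p.1, σ p.1 p.2⟩

/-- `𝕊`-symmetric Boolean evolution function -/
def SSym (g : BState m → BState m) : Prop :=
  ∀ (σ : ∀ i : Fin n, Equiv.Perm (Fin (m i))) (x : BState m) (p : BIdx m),
    g (act σ x) p = g x ⟨p.1, σ p.1 p.2⟩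

end Binarisation


section Aux

variable {n : ℕ} {m : Fin n → ℕ}

lemma sigma_ne_of_snd_ne {i : Fin n} {j k : Fin (m i)} (h : j ≠ k) :
    (⟨i, j⟩ : BIdx m) ≠ ⟨i, k⟩ := by
  intro hq; apply h; simpa using hq

lemma psi_update_ne (x : BState m) (p : BIdx m) (v : Fin 2) {i : Fin n} (h : i ≠ p.1) :
    (psi (Function.update x p v) i : ℕ) = (psi x i : ℕ) := by
  simp only [psi]
  exact Finset.sum_congr rfl fun j _ => by
    rw [Function.update_of_ne (fun hq => h (congrArg Sigma.fst hq))]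

lemma psi_update_self (x : BState m) (p : BIdx m) (v : Fin 2) :
    (psi (Function.update x p v) p.1 : ℕ) + (x p : ℕ) = (psi x p.1 : ℕ) + (v : ℕ) := by
  obtain ⟨i, j⟩ := p
  simp only [psi]
  rw [← Finset.add_sum_erase Finset.univ (fun k => ((Function.update x ⟨i, j⟩ v ⟨i, k⟩ : Fin 2) : ℕ)) (Finset.mem_univ j),
      ← Finset.add_sum_erase Finset.univ (fun k => ((x ⟨i, k⟩ : Fin 2) : ℕ)) (Finset.mem_univ j)]
  have h2 : ∀ k ∈ Finset.univ.erase j,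
      ((Function.update x ⟨i, j⟩ v ⟨i, k⟩ : Fin 2) : ℕ) = ((x ⟨i, k⟩ : Fin 2) : ℕ) := by
    intro k hk
    rw [Function.update_of_ne (sigma_ne_of_snd_ne (Finset.ne_of_mem_erase hk))]
  rw [Finset.sum_congr rfl h2, Function.update_self]
  ring

lemma psi_pos (x : BState m) {i : Fin n} {j : Fin (m i)} (hj : (x ⟨i, j⟩ : ℕ) = 1) :
    1 ≤ (psi x i : ℕ) := by
  simp only [psi]
  calc 1 = (x ⟨i, j⟩ : ℕ) := hj.symm
    _ ≤ _ := Finset.single_le_sum (f := fun k => ((x ⟨i, k⟩ : Fin 2) : ℕ))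
        (fun _ _ => Nat.zero_le _) (Finset.mem_univ j)

lemma psi_lt (x : BState m) {i : Fin n} {j : Fin (m i)} (hj : (x ⟨i, j⟩ : ℕ) = 0) :
    (psi x i : ℕ) < m i := by
  simp only [psi]
  calc ∑ k : Fin (m i), ((x ⟨i, k⟩ : Fin 2) : ℕ) < ∑ _k : Fin (m i), 1 := by
        apply Finset.sum_lt_sum (fun k _ => Nat.lt_succ_iff.mp (x ⟨i, k⟩).isLt)
        exact ⟨j, Finset.mem_univ j, by simp [hj]⟩
    _ = m i := by simp

lemma psi_two_le (x : BState m) {i : Fin n} {j k : Fin (m i)} (hjk : j ≠ k)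
    (hj : (x ⟨i, j⟩ : ℕ) = 1) (hk : (x ⟨i, k⟩ : ℕ) = 1) :
    2 ≤ (psi x i : ℕ) := by
  simp only [psi]
  calc 2 = ∑ t ∈ ({j, k} : Finset (Fin (m i))), ((x ⟨i, t⟩ : Fin 2) : ℕ) := by
        rw [Finset.sum_pair hjk, hj, hk]
    _ ≤ _ := Finset.sum_le_sum_of_subset (Finset.subset_univ _)

lemma psi_le_sub_two (x : BState m) {i : Fin n} {j k : Fin (m i)} (hjk : j ≠ k)
    (hj : (x ⟨i, j⟩ : ℕ) = 0) (hk : (x ⟨i, k⟩ : ℕ) = 0) :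
    (psi x i : ℕ) + 2 ≤ m i := by
  simp only [psi]
  have hsplit := Finset.sum_add_sum_compl ({j, k} : Finset (Fin (m i)))
      (fun t => ((x ⟨i, t⟩ : Fin 2) : ℕ))
  have h1 : ∑ t ∈ ({j, k} : Finset (Fin (m i))), ((x ⟨i, t⟩ : Fin 2) : ℕ) = 0 := by
    rw [Finset.sum_pair hjk, hj, hk]
  have h2 : ∑ t ∈ (({j, k} : Finset (Fin (m i)))ᶜ), ((x ⟨i, t⟩ : Fin 2) : ℕ)
      ≤ (({j, k} : Finset (Fin (m i)))ᶜ).card := by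
    calc _ ≤ ∑ _t ∈ (({j, k} : Finset (Fin (m i)))ᶜ), 1 :=
          Finset.sum_le_sum (fun t _ => Nat.lt_succ_iff.mp (x ⟨i, t⟩).isLt)
      _ = _ := by simp
  have h3 : ((({j, k} : Finset (Fin (m i)))ᶜ)).card = m i - 2 := by
    rw [Finset.card_compl, Finset.card_pair hjk]; simp
  have h4 : 2 ≤ m i := by
    have := Finset.card_le_univ ({j, k} : Finset (Fin (m i)))
    rw [Finset.card_pair hjk] at this
    simpa using this
  omega

lemma psi_bump (x : BState m) {i : Fin n} (j : Fin (m i))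
    (hb : ((x ⟨i, j⟩ : Fin 2) : ℕ) < bOne m ⟨i, j⟩) :
    ∃ h' : (psi x i : ℕ) < m i,
      psi (bump (bOne m) x ⟨i, j⟩ hb) = bump m (psi x) i h' := by
  have hb' : ((x ⟨i, j⟩ : Fin 2) : ℕ) < 1 := hb
  have hx0 : ((x ⟨i, j⟩ : Fin 2) : ℕ) = 0 := by omega
  refine ⟨psi_lt x hx0, funext fun i₀ => Fin.ext ?_⟩
  by_cases hi : i₀ = i
  · subst hi
    have h1 := psi_update_self x ⟨i₀, j⟩ ⟨((x ⟨i₀, j⟩ : Fin 2) : ℕ) + 1, Nat.succ_lt_succ hb⟩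
    simp only [bump, Function.update_self]
    simp only [Fin.val_mk] at h1 ⊢
    omega
  · have h1 := psi_update_ne x ⟨i, j⟩ ⟨((x ⟨i, j⟩ : Fin 2) : ℕ) + 1, Nat.succ_lt_succ hb⟩ hi
    simp only [bump]
    rw [Function.update_of_ne hi]
    exact h1

lemma psi_drop (x : BState m) {i : Fin n} (j : Fin (m i))
    (hd : 0 < ((x ⟨i, j⟩ : Fin 2) : ℕ)) :
    psi (drop (bOne m) x ⟨i, j⟩) = drop m (psi x) i := by
  have hle : ((x ⟨i, j⟩ : Fin 2) : ℕ) ≤ 1 := Nat.lt_succ_iff.mp (x ⟨i, j⟩).isLt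
  have hx1 : ((x ⟨i, j⟩ : Fin 2) : ℕ) = 1 := by omega
  have hpos : 1 ≤ (psi x i : ℕ) := psi_pos x hx1
  funext i₀; apply Fin.ext
  by_cases hi : i₀ = i
  · subst hi
    have h1 := psi_update_self x ⟨i₀, j⟩
      ⟨((x ⟨i₀, j⟩ : Fin 2) : ℕ) - 1, lt_of_le_of_lt (Nat.sub_le _ _) (x ⟨i₀, j⟩).isLt⟩
    simp only [drop, Function.update_self]
    simp only [Fin.val_mk] at h1 ⊢
    omega
  · have h1 := psi_update_ne x ⟨i, j⟩
      ⟨((x ⟨i, j⟩ : Fin 2) : ℕ) - 1, lt_of_le_of_lt (Nat.sub_le _ _) (x ⟨i, j⟩).isLt⟩ hi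
    simp only [drop]
    rw [Function.update_of_ne hi]
    exact h1

lemma binf_le_one (f : GState m → GState m) (z : BState m) (q : BIdx m) :
    ((binf f z q : Fin 2) : ℕ) ≤ 1 := Nat.lt_succ_iff.mp (binf f z q).isLt

lemma binf_eq_zero (f : GState m → GState m) (z : BState m) {i' : Fin n} (j' : Fin (m i'))
    (h : ((binf f z ⟨i', j'⟩ : Fin 2) : ℕ) = 0) :
    (f (psi z) i' : ℕ) ≤ (psi z i' : ℕ) ∧
      ((f (psi z) i' : ℕ) < (psi z i' : ℕ) ∨ ((z ⟨i', j'⟩ : Fin 2) : ℕ) = 0) := by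
  unfold binf at h
  split_ifs at h with h1 h2
  · simp at h
  · exact ⟨le_of_lt h2, Or.inl h2⟩
  · exact ⟨le_of_not_gt h1, Or.inr h⟩

lemma binf_eq_one (f : GState m → GState m) (z : BState m) {i' : Fin n} (j' : Fin (m i'))
    (h : ((binf f z ⟨i', j'⟩ : Fin 2) : ℕ) = 1) :
    (psi z i' : ℕ) ≤ (f (psi z) i' : ℕ) ∧
      ((psi z i' : ℕ) < (f (psi z) i' : ℕ) ∨ ((z ⟨i', j'⟩ : Fin 2) : ℕ) = 1) := by
  unfold binf at h
  split_ifs at h with h1 h2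
  · exact ⟨le_of_lt h1, Or.inl h1⟩
  · simp at h
  · exact ⟨le_of_not_gt h2, Or.inr h⟩

lemma asym_facts (f : GState m → GState m) (hf : Asymptotic m f) (y : GState m) (i : Fin n) :
    (f y i : ℕ) = 0 ∨ (f y i : ℕ) = (y i : ℕ) ∨ (f y i : ℕ) = m i := by
  rcases hf y i with h | h | h
  · exact Or.inl h
  · exact Or.inr (Or.inl (congrArg Fin.val h))
  · exact Or.inr (Or.inr h)

end Aux

/-- regulation preservation, direction 2: a signed edge
`(i,j) → (i',j')` of `G𝔹(f)(x)` projects to a like-signed edge `i → i'` of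
`Gf(ψ(x))`. -/
theorem regulation_preserving_backward
    {n : ℕ} {m : Fin n → ℕ} (f : GState m → GState m)
    (hf : Asymptotic m f) (x : BState m) (p p' : BIdx m) (s : Bool)
    (h : SignedEdge (bOne m) (binf f) x s p p') :
    SignedEdge m f (psi x) s p.1 p'.1 := by
  obtain ⟨i, j⟩ := p
  obtain ⟨i', j'⟩ := p'
  have hM : (psi x i : ℕ) ≤ m i := Nat.lt_succ_iff.mp (psi x i).isLt
  cases s
  · -- positive edge
    simp only [SignedEdge, Bool.false_eq_true, if_false] at h ⊢
    rcases h with ⟨hb, hlt⟩ | ⟨hd, hlt⟩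
    · -- bump direction
      obtain ⟨h', he⟩ := psi_bump x j hb
      have hA := binf_le_one f x ⟨i', j'⟩
      have hB := binf_le_one f (bump (bOne m) x ⟨i, j⟩ hb) ⟨i', j'⟩
      have h0 := binf_eq_zero f x j' (by omega)
      have h1 := binf_eq_one f (bump (bOne m) x ⟨i, j⟩ hb) j' (by omega)
      rw [he] at h1
      refine Or.inl ⟨h', ?_⟩
      by_cases hii : i' = i
      · subst hii
        have hbv : ((bump m (psi x) i' h' i' : Fin (m i' + 1)) : ℕ) = (psi x i' : ℕ) + 1 := by
          simp [bump]
        rw [hbv] at h1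
        omega
      · have hbv : ((bump m (psi x) i h' i' : Fin (m i' + 1)) : ℕ) = (psi x i' : ℕ) := by
          simp [bump, Function.update_of_ne hii]
        have hne : (⟨i', j'⟩ : BIdx m) ≠ ⟨i, j⟩ := fun hq => hii (congrArg Sigma.fst hq)
        have hbv2 : ((bump (bOne m) x ⟨i, j⟩ hb ⟨i', j'⟩ : Fin 2) : ℕ)
            = ((x ⟨i', j'⟩ : Fin 2) : ℕ) := by
          simp [bump, Function.update_of_ne hne]
        rw [hbv, hbv2] at h1
        omega
    · -- drop direction
      have hle1 : ((x ⟨i, j⟩ : Fin 2) : ℕ) ≤ 1 := Nat.lt_succ_iff.mp (x ⟨i, j⟩).isLt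
      have hx1 : ((x ⟨i, j⟩ : Fin 2) : ℕ) = 1 := by omega
      have hdp := psi_drop x j hd
      have hpos : 1 ≤ (psi x i : ℕ) := psi_pos x hx1
      have hA := binf_le_one f x ⟨i', j'⟩
      have hB := binf_le_one f (drop (bOne m) x ⟨i, j⟩) ⟨i', j'⟩
      have h0 := binf_eq_zero f (drop (bOne m) x ⟨i, j⟩) j' (by omega)
      have h1 := binf_eq_one f x j' (by omega)
      rw [hdp] at h0
      refine Or.inr ⟨by omega, ?_⟩
      by_cases hii : i' = i
      · subst hii
        have hdv : ((drop m (psi x) i' i' : Fin (m i' + 1)) : ℕ) = (psi x i' : ℕ) - 1 := by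
          simp [drop]
        rw [hdv] at h0
        omega
      · have hdv : ((drop m (psi x) i i' : Fin (m i' + 1)) : ℕ) = (psi x i' : ℕ) := by
          simp [drop, Function.update_of_ne hii]
        have hne : (⟨i', j'⟩ : BIdx m) ≠ ⟨i, j⟩ := fun hq => hii (congrArg Sigma.fst hq)
        have hdv2 : ((drop (bOne m) x ⟨i, j⟩ ⟨i', j'⟩ : Fin 2) : ℕ)
            = ((x ⟨i', j'⟩ : Fin 2) : ℕ) := by
          simp [drop, Function.update_of_ne hne]
        rw [hdv, hdv2] at h0
        omega
  · -- negative edge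
    simp only [SignedEdge, if_true] at h ⊢
    rcases h with ⟨hb, hlt⟩ | ⟨hd, hlt⟩
    · -- bump direction
      obtain ⟨h', he⟩ := psi_bump x j hb
      have hb0 : ((x ⟨i, j⟩ : Fin 2) : ℕ) = 0 := by
        have : ((x ⟨i, j⟩ : Fin 2) : ℕ) < 1 := hb
        omega
      have hA := binf_le_one f x ⟨i', j'⟩
      have hB := binf_le_one f (bump (bOne m) x ⟨i, j⟩ hb) ⟨i', j'⟩
      have h0 := binf_eq_one f x j' (by omega)
      have h1 := binf_eq_zero f (bump (bOne m) x ⟨i, j⟩ hb) j' (by omega)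
      rw [he] at h1
      refine Or.inl ⟨h', ?_⟩
      by_cases hii : i' = i
      · subst hii
        have hbv : ((bump m (psi x) i' h' i' : Fin (m i' + 1)) : ℕ) = (psi x i' : ℕ) + 1 := by
          simp [bump]
        rw [hbv] at h1
        have ha2 := asym_facts f hf (bump m (psi x) i' h') i'
        rw [hbv] at ha2
        have ha1 := asym_facts f hf (psi x) i'
        by_cases hjj : j' = j
        · subst hjj
          have hbv2 : ((bump (bOne m) x ⟨i', j'⟩ hb ⟨i', j'⟩ : Fin 2) : ℕ) = 1 := by
            simp [bump, hb0]
          rw [hbv2] at h1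
          omega
        · have hne : (⟨i', j'⟩ : BIdx m) ≠ ⟨i', j⟩ := sigma_ne_of_snd_ne hjj
          have hbv2 : ((bump (bOne m) x ⟨i', j⟩ hb ⟨i', j'⟩ : Fin 2) : ℕ)
              = ((x ⟨i', j'⟩ : Fin 2) : ℕ) := by
            simp [bump, Function.update_of_ne hne]
          rw [hbv2] at h1
          have ht : ((x ⟨i', j'⟩ : Fin 2) : ℕ) ≤ 1 := Nat.lt_succ_iff.mp (x ⟨i', j'⟩).isLt
          clear hlt
          have hcA : ¬ ((x ⟨i', j'⟩ : Fin 2) : ℕ) = 0 ∨ (psi x i' : ℕ) + 2 ≤ m i' := by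
            by_cases hz : ((x ⟨i', j'⟩ : Fin 2) : ℕ) = 0
            · exact Or.inr (psi_le_sub_two x (fun hq => hjj hq.symm) hb0 hz)
            · exact Or.inl hz
          have hcB : ((x ⟨i', j'⟩ : Fin 2) : ℕ) = 0 ∨ 1 ≤ (psi x i' : ℕ) := by
            by_cases hz : ((x ⟨i', j'⟩ : Fin 2) : ℕ) = 0
            · exact Or.inl hz
            · exact Or.inr (psi_pos x (show ((x ⟨i', j'⟩ : Fin 2) : ℕ) = 1 by omega))
          omega
      · have hbv : ((bump m (psi x) i h' i' : Fin (m i' + 1)) : ℕ) = (psi x i' : ℕ) := by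
          simp [bump, Function.update_of_ne hii]
        have hne : (⟨i', j'⟩ : BIdx m) ≠ ⟨i, j⟩ := fun hq => hii (congrArg Sigma.fst hq)
        have hbv2 : ((bump (bOne m) x ⟨i, j⟩ hb ⟨i', j'⟩ : Fin 2) : ℕ)
            = ((x ⟨i', j'⟩ : Fin 2) : ℕ) := by
          simp [bump, Function.update_of_ne hne]
        rw [hbv, hbv2] at h1
        omega
    · -- drop direction
      have hle1 : ((x ⟨i, j⟩ : Fin 2) : ℕ) ≤ 1 := Nat.lt_succ_iff.mp (x ⟨i, j⟩).isLt
      have hx1 : ((x ⟨i, j⟩ : Fin 2) : ℕ) = 1 := by omega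
      have hdp := psi_drop x j hd
      have hpos : 1 ≤ (psi x i : ℕ) := psi_pos x hx1
      have hA := binf_le_one f x ⟨i', j'⟩
      have hB := binf_le_one f (drop (bOne m) x ⟨i, j⟩) ⟨i', j'⟩
      have h0 := binf_eq_zero f x j' (by omega)
      have h1 := binf_eq_one f (drop (bOne m) x ⟨i, j⟩) j' (by omega)
      rw [hdp] at h1
      refine Or.inr ⟨by omega, ?_⟩
      by_cases hii : i' = i
      · subst hii
        have hdv : ((drop m (psi x) i' i' : Fin (m i' + 1)) : ℕ) = (psi x i' : ℕ) - 1 := by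
          simp [drop]
        rw [hdv] at h1
        have ha2 := asym_facts f hf (drop m (psi x) i') i'
        rw [hdv] at ha2
        have ha1 := asym_facts f hf (psi x) i'
        by_cases hjj : j' = j
        · subst hjj
          have hdv2 : ((drop (bOne m) x ⟨i', j'⟩ ⟨i', j'⟩ : Fin 2) : ℕ) = 0 := by
            simp [drop, hx1]
          rw [hdv2] at h1
          omega
        · have hne : (⟨i', j'⟩ : BIdx m) ≠ ⟨i', j⟩ := sigma_ne_of_snd_ne hjj
          have hdv2 : ((drop (bOne m) x ⟨i', j⟩ ⟨i', j'⟩ : Fin 2) : ℕ)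
              = ((x ⟨i', j'⟩ : Fin 2) : ℕ) := by
            simp [drop, Function.update_of_ne hne]
          rw [hdv2] at h1
          have ht : ((x ⟨i', j'⟩ : Fin 2) : ℕ) ≤ 1 := Nat.lt_succ_iff.mp (x ⟨i', j'⟩).isLt
          clear hlt
          have hcA : ((x ⟨i', j'⟩ : Fin 2) : ℕ) = 0 ∨ 2 ≤ (psi x i' : ℕ) := by
            by_cases hz : ((x ⟨i', j'⟩ : Fin 2) : ℕ) = 0
            · exact Or.inl hz
            · exact Or.inr (psi_two_le x (fun hq => hjj hq.symm) hx1 (by omega))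
          have hcC : ¬ ((x ⟨i', j'⟩ : Fin 2) : ℕ) = 0 ∨ (psi x i' : ℕ) < m i' := by
            by_cases hz : ((x ⟨i', j'⟩ : Fin 2) : ℕ) = 0
            · exact Or.inr (psi_lt x hz)
            · exact Or.inl hz
          omega
      · have hdv : ((drop m (psi x) i i' : Fin (m i' + 1)) : ℕ) = (psi x i' : ℕ) := by
          simp [drop, Function.update_of_ne hii]
        have hne : (⟨i', j'⟩ : BIdx m) ≠ ⟨i, j⟩ := fun hq => hii (congrArg Sigma.fst hq)
        have hdv2 : ((drop (bOne m) x ⟨i, j⟩ ⟨i', j'⟩ : Fin 2) : ℕ)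
            = ((x ⟨i', j'⟩ : Fin 2) : ℕ) := by
          simp [drop, Function.update_of_ne hne]
        rw [hdv, hdv2] at h1
        omega

end GRN
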